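/- arXiv:1005.1991 — 4 statements merged into one kernel-verified Lean document; each statement's English description precedes it below -/
import Mathlib

section
/- If T ⊆ List ℕ is a prefix-closed set of finite sequences of natural numbers on which the proper-extension relation (a ≺ b iff b is a proper prefix of a) is well-founded (i.e., T is a well-founded tree), then the Kleene–Brouwer ordering restricted to T is well-founded; hence, being a linear order, it is a well-order on T. -/
/-- The Kleene–Brouwer ordering on finite sequences of natural numbers. -/
def KBLt (a b : List ℕ) : Prop :=
  (b <+: a ∧ b ≠ a) ∨ ∃ (l : List ℕ) (m n : ℕ), m < n ∧ (l ++ [m]) <+: a ∧ (l ++ [n]) <+: b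

/-- `T` is prefix-closed: together with any list it contains all its prefixes. -/
def PrefixClosed (T : Set (List ℕ)) : Prop :=
  ∀ l ∈ T, ∀ l' : List ℕ, l' <+: l → l' ∈ T

section KBAux
open scoped Classical

variable (T : Set (List ℕ))
variable (hwf : WellFounded (fun a b : T => (b : List ℕ) <+: (a : List ℕ) ∧ (b : List ℕ) ≠ (a : List ℕ)))

/-- Subtree rank, defined by recursion on the tree well-foundedness. -/
noncomputable def kbSig : T → Ordinal.{0} :=
  hwf.fix (fun x rec => Order.succ (⨆ n : ℕ,
    (((List.range (n+1)).map (fun i =>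
      if h : (x : List ℕ) ++ [i] ∈ T then
        rec ⟨(x : List ℕ) ++ [i], h⟩ ⟨⟨[i], rfl⟩, by simp⟩ else 0)).sum)))

/-- Subtree rank, extended by `0` outside `T`. -/
noncomputable def kbSig' : List ℕ → Ordinal.{0} :=
  fun x => if h : x ∈ T then kbSig T hwf ⟨x, h⟩ else 0

/-- Sum of the ranks of the first `k` children of `c`. -/
noncomputable def kbLsum (c : List ℕ) (k : ℕ) : Ordinal.{0} :=
  ((List.range k).map (fun i => kbSig' T hwf (c ++ [i]))).sum

lemma kbSig'_eq {x : List ℕ} (hx : x ∈ T) :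
    kbSig' T hwf x = Order.succ (⨆ n : ℕ, kbLsum T hwf x (n+1)) := by
  simp only [kbSig', dif_pos hx, kbSig]
  rw [WellFounded.fix_eq]
  refine congrArg Order.succ (iSup_congr fun n => ?_)
  unfold kbLsum
  refine congrArg List.sum (List.map_congr_left fun i _ => ?_)
  by_cases h : x ++ [i] ∈ T <;> simp [kbSig', kbSig, h]

lemma kbLsum_succ (c : List ℕ) (k : ℕ) :
    kbLsum T hwf c (k+1) = kbLsum T hwf c k + kbSig' T hwf (c ++ [k]) := by
  simp [kbLsum, List.range_succ]

lemma kbLsum_mono (c : List ℕ) {k k' : ℕ} (h : k ≤ k') :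
    kbLsum T hwf c k ≤ kbLsum T hwf c k' := by
  induction k', h using Nat.le_induction with
  | base => exact le_rfl
  | succ n hn ih => exact ih.trans (by rw [kbLsum_succ]; exact le_self_add)

lemma kbSig'_pos {x : List ℕ} (hx : x ∈ T) : 0 < kbSig' T hwf x := by
  rw [kbSig'_eq T hwf hx]
  exact lt_of_le_of_lt (zero_le) (Order.lt_succ _)

/-- Path sum: sums of ranks of left siblings along a path. -/
noncomputable def kbPs : List ℕ → List ℕ → Ordinal.{0}
  | _, [] => 0
  | c, k :: r => kbLsum T hwf c k + kbPs (c ++ [k]) r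

lemma kbPs_append (u : List ℕ) : ∀ (c v : List ℕ),
    kbPs T hwf c (u ++ v) = kbPs T hwf c u + kbPs T hwf (c ++ u) v := by
  induction u with
  | nil => intro c v; simp [kbPs]
  | cons k r ih =>
    intro c v
    simp only [List.cons_append, kbPs]
    rw [ih]
    simp [add_assoc, List.append_assoc]

lemma kbKey (hclosed : PrefixClosed T) : ∀ (r c : List ℕ), c ++ r ∈ T →
    kbPs T hwf c r + kbSig' T hwf (c ++ r) ≤ kbSig' T hwf c := by
  intro r
  induction r with
  | nil => intro c _; simp [kbPs]
  | cons k r' ih =>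
    intro c hmem
    have hc : c ∈ T := hclosed _ hmem c ⟨k :: r', rfl⟩
    have hck : (c ++ [k]) ++ r' ∈ T := by simpa [List.append_assoc] using hmem
    calc kbPs T hwf c (k :: r') + kbSig' T hwf (c ++ (k :: r'))
        = kbLsum T hwf c k + (kbPs T hwf (c ++ [k]) r' + kbSig' T hwf ((c ++ [k]) ++ r')) := by
          simp [kbPs, add_assoc, List.append_assoc]
      _ ≤ kbLsum T hwf c k + kbSig' T hwf (c ++ [k]) :=
          add_le_add_right (ih _ hck) _
      _ = kbLsum T hwf c (k+1) := (kbLsum_succ T hwf c k).symm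
      _ ≤ ⨆ n : ℕ, kbLsum T hwf c (n+1) := le_ciSup (Ordinal.bddAbove_range _) k
      _ ≤ kbSig' T hwf c := by rw [kbSig'_eq T hwf hc]; exact (Order.lt_succ _).le

lemma kbKeyLt (hclosed : PrefixClosed T) : ∀ (r c : List ℕ), r ≠ [] → c ++ r ∈ T →
    kbPs T hwf c r + kbSig' T hwf (c ++ r) < kbSig' T hwf c := by
  rintro (_ | ⟨k, r'⟩) c hne hmem
  · exact absurd rfl hne
  · have hc : c ∈ T := hclosed _ hmem c ⟨k :: r', rfl⟩
    have hck : (c ++ [k]) ++ r' ∈ T := by simpa [List.append_assoc] using hmem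
    calc kbPs T hwf c (k :: r') + kbSig' T hwf (c ++ (k :: r'))
        = kbLsum T hwf c k + (kbPs T hwf (c ++ [k]) r' + kbSig' T hwf ((c ++ [k]) ++ r')) := by
          simp [kbPs, add_assoc, List.append_assoc]
      _ ≤ kbLsum T hwf c k + kbSig' T hwf (c ++ [k]) :=
          add_le_add_right (kbKey T hwf hclosed _ _ hck) _
      _ = kbLsum T hwf c (k+1) := (kbLsum_succ T hwf c k).symm
      _ ≤ ⨆ n : ℕ, kbLsum T hwf c (n+1) := le_ciSup (Ordinal.bddAbove_range _) k
      _ < kbSig' T hwf c := by rw [kbSig'_eq T hwf hc]; exact Order.lt_succ _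

end KBAux

theorem kb_wellFounded_on_wellFounded_tree (T : Set (List ℕ))
    (hclosed : PrefixClosed T)
    (hwf : WellFounded (fun a b : T => (b : List ℕ) <+: (a : List ℕ) ∧ (b : List ℕ) ≠ (a : List ℕ))) :
    WellFounded (fun a b : T => KBLt (a : List ℕ) (b : List ℕ)) := by
  set σ := kbSig' T hwf with hσ
  set ps := kbPs T hwf with hps
  have main : ∀ a b : T, KBLt (a : List ℕ) (b : List ℕ) →
      ps [] (a : List ℕ) + σ (a : List ℕ) < ps [] (b : List ℕ) + σ (b : List ℕ) := by
    rintro ⟨a, ha⟩ ⟨b, hb⟩ (⟨⟨r, hr⟩, hne⟩ | ⟨l, m, n, hmn, ⟨ra, hra⟩, ⟨rb, hrb⟩⟩)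
    · -- b is a proper prefix of a
      have hrne : r ≠ [] := by rintro rfl; simp at hr; exact hne hr
      subst hr
      calc ps [] (b ++ r) + σ (b ++ r)
          = ps [] b + (ps b r + σ (b ++ r)) := by
            rw [hps, kbPs_append]; simp [add_assoc]
        _ < ps [] b + σ b := add_lt_add_right (kbKeyLt T hwf hclosed r b hrne ha) _
    · -- divergence: l ++ [m] ≤ a, l ++ [n] ≤ b, m < n
      subst hra hrb
      have hmemA : (l ++ [m]) ++ ra ∈ T := ha
      have hmemB : (l ++ [n]) ++ rb ∈ T := hb
      have h1 : ps [] ((l ++ [m]) ++ ra) + σ ((l ++ [m]) ++ ra)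
          ≤ ps [] l + kbLsum T hwf l n := by
        have e : ps [] ((l ++ [m]) ++ ra) = ps [] l + (kbLsum T hwf l m + ps (l ++ [m]) ra) := by
          rw [hps, show (l ++ [m]) ++ ra = l ++ (m :: ra) by simp, kbPs_append]
          simp [kbPs]
        rw [e, add_assoc, add_assoc]
        refine add_le_add_right ?_ _
        calc kbLsum T hwf l m + (ps (l ++ [m]) ra + σ ((l ++ [m]) ++ ra))
            ≤ kbLsum T hwf l m + σ (l ++ [m]) :=
              add_le_add_right (kbKey T hwf hclosed ra (l ++ [m]) hmemA) _
          _ = kbLsum T hwf l (m+1) := (kbLsum_succ T hwf l m).symm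
          _ ≤ kbLsum T hwf l n := kbLsum_mono T hwf l hmn
      have h2 : ps [] l + kbLsum T hwf l n
          < ps [] ((l ++ [n]) ++ rb) + σ ((l ++ [n]) ++ rb) := by
        have e : ps [] ((l ++ [n]) ++ rb) = ps [] l + (kbLsum T hwf l n + ps (l ++ [n]) rb) := by
          rw [hps, show (l ++ [n]) ++ rb = l ++ (n :: rb) by simp, kbPs_append]
          simp [kbPs]
        rw [e, add_assoc, add_assoc]
        refine add_lt_add_right ?_ _
        have hpos : 0 < ps (l ++ [n]) rb + σ ((l ++ [n]) ++ rb) :=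
          lt_of_lt_of_le (kbSig'_pos T hwf hmemB) (le_add_self)
        calc kbLsum T hwf l n = kbLsum T hwf l n + 0 := (add_zero _).symm
          _ < kbLsum T hwf l n + (ps (l ++ [n]) rb + σ ((l ++ [n]) ++ rb)) :=
              add_lt_add_right hpos _
      exact lt_of_le_of_lt h1 h2
  exact Subrelation.wf (fun {a b} h => main a b h)
    (InvImage.wf (fun x : T => ps [] (x : List ℕ) + σ (x : List ℕ)) Ordinal.lt_wf)
end

section
/- Let T ⊆ List ℕ be a nonempty prefix-closed well-founded tree, and let α be the depth of T, i.e., the ordinal rank of the root [] with respect to the proper-extension relation on T. Then the order type of the Kleene–Brouwer ordering on T is at most ω^α + 1. -/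
namespace KBProof

open Ordinal

variable {T : Set (List ℕ)}
variable (hwf : WellFounded fun a b : T =>
    (b : List ℕ) <+: (a : List ℕ) ∧ (b : List ℕ) ≠ (a : List ℕ))

theorem ne_append_singleton (l : List ℕ) (m : ℕ) : l ≠ l ++ [m] := by
  intro h; simpa using congrArg List.length h

theorem rank_child_lt {l s : List ℕ} (hl : l ∈ T) (hs : s ∈ T)
    (h : l <+: s) (hne : l ≠ s) :
    (hwf.apply (⟨s, hs⟩ : T)).rank < (hwf.apply (⟨l, hl⟩ : T)).rank :=
  (hwf.apply _).rank_lt_of_rel ⟨h, hne⟩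

open Classical in
noncomputable def term (l : List ℕ) (m : ℕ) : Ordinal :=
  if h : l ++ [m] ∈ T then omega0 ^ (hwf.apply (⟨l ++ [m], h⟩ : T)).rank + 1 else 0

theorem term_eq {l : List ℕ} {m : ℕ} (h : l ++ [m] ∈ T) :
    term hwf l m = omega0 ^ (hwf.apply (⟨l ++ [m], h⟩ : T)).rank + 1 :=
  dif_pos h

theorem term_lt {l : List ℕ} (hl : l ∈ T) (hr : 0 < (hwf.apply (⟨l, hl⟩ : T)).rank) (m : ℕ) :
    term hwf l m < omega0 ^ (hwf.apply (⟨l, hl⟩ : T)).rank := by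
  have hone : (1 : Ordinal) < omega0 ^ (hwf.apply (⟨l, hl⟩ : T)).rank := by
    simpa using (opow_lt_opow_iff_right one_lt_omega0).2 hr
  unfold term
  split
  · next h =>
    exact principal_add_omega0_opow _
      ((opow_lt_opow_iff_right one_lt_omega0).2
        (rank_child_lt hwf hl h (l.prefix_append [m]) (ne_append_singleton l m))) hone
  · exact opow_pos _ omega0_pos

noncomputable def F (l : List ℕ) : ℕ → Ordinal
  | 0 => 0
  | n + 1 => F l n + term hwf l n

theorem F_lt {l : List ℕ} (hl : l ∈ T) (hr : 0 < (hwf.apply (⟨l, hl⟩ : T)).rank) (n : ℕ) :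
    F hwf l n < omega0 ^ (hwf.apply (⟨l, hl⟩ : T)).rank := by
  induction n with
  | zero => exact opow_pos _ omega0_pos
  | succ n ih => exact principal_add_omega0_opow _ ih (term_lt hwf hl hr n)

theorem F_mono (l : List ℕ) {m n : ℕ} (h : m ≤ n) : F hwf l m ≤ F hwf l n := by
  induction n with
  | zero => simp_all
  | succ n ih =>
    rcases Nat.lt_or_ge m (n + 1) with h' | h'
    · exact (ih (Nat.lt_succ_iff.1 h')).trans (le_self_add)
    · have : m = n + 1 := le_antisymm h h'
      subst this; rfl

noncomputable def go : (rest l : List ℕ) → l ++ rest ∈ T → Ordinal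
  | [], l, h => omega0 ^ (hwf.apply (⟨l, by simpa using h⟩ : T)).rank
  | n :: rest, l, h => F hwf l n + go rest (l ++ [n]) (by simpa using h)

theorem go_pos : ∀ (rest l : List ℕ) (h : l ++ rest ∈ T), 0 < go hwf rest l h
  | [], l, h => opow_pos _ omega0_pos
  | n :: rest, l, h =>
    lt_of_lt_of_le (go_pos rest (l ++ [n]) (by simpa using h)) (le_add_self)

theorem go_le (hclosed : PrefixClosed T) :
    ∀ (rest l : List ℕ) (h : l ++ rest ∈ T) (hl : l ∈ T),
      go hwf rest l h ≤ omega0 ^ (hwf.apply (⟨l, hl⟩ : T)).rank + 1 ∧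
        (rest ≠ [] → go hwf rest l h < omega0 ^ (hwf.apply (⟨l, hl⟩ : T)).rank) := by
  intro rest
  induction rest with
  | nil =>
    intro l h hl
    refine ⟨?_, by simp⟩
    show omega0 ^ (hwf.apply (⟨l, _⟩ : T)).rank ≤ _
    exact le_self_add
  | cons n rest ih =>
    intro l h hl
    have hmem : (l ++ [n]) ++ rest ∈ T := by simpa using h
    have hchild : l ++ [n] ∈ T := hclosed _ hmem _ ⟨rest, rfl⟩
    have hrank : (hwf.apply (⟨l ++ [n], hchild⟩ : T)).rank < (hwf.apply (⟨l, hl⟩ : T)).rank :=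
      rank_child_lt hwf hl hchild (l.prefix_append [n]) (ne_append_singleton l n)
    have hrpos : 0 < (hwf.apply (⟨l, hl⟩ : T)).rank := (zero_le).trans_lt hrank
    have h1 : go hwf (n :: rest) l h ≤ F hwf l (n + 1) := by
      show F hwf l n + go hwf rest (l ++ [n]) _ ≤ F hwf l n + term hwf l n
      refine add_le_add_right ?_ _
      rw [term_eq hwf hchild]
      exact (ih (l ++ [n]) _ hchild).1
    have h2 : go hwf (n :: rest) l h < omega0 ^ (hwf.apply (⟨l, hl⟩ : T)).rank :=
      h1.trans_lt (F_lt hwf hl hrpos (n + 1))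
    exact ⟨h2.le.trans (le_self_add), fun _ => h2⟩

theorem go_prefix (hclosed : PrefixClosed T) :
    ∀ (t rest l : List ℕ), rest ≠ [] →
      ∀ (h : l ++ (t ++ rest) ∈ T) (h' : l ++ t ∈ T),
        go hwf (t ++ rest) l h < go hwf t l h' := by
  intro t
  induction t with
  | nil =>
    intro rest l hne h h'
    have hl : l ∈ T := by simpa using h'
    exact (go_le hwf hclosed rest l (by simpa using h) hl).2 hne
  | cons n t ih =>
    intro rest l hne h h'
    show F hwf l n + go hwf (t ++ rest) (l ++ [n]) _ < F hwf l n + go hwf t (l ++ [n]) _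
    exact add_lt_add_right (ih rest (l ++ [n]) hne _ _) _

theorem go_kb2 (hclosed : PrefixClosed T) :
    ∀ (p : List ℕ) {m n : ℕ}, m < n → ∀ (s' t' l : List ℕ)
      (hs : l ++ (p ++ m :: s') ∈ T) (ht : l ++ (p ++ n :: t') ∈ T),
      go hwf (p ++ m :: s') l hs < go hwf (p ++ n :: t') l ht := by
  intro p
  induction p with
  | nil =>
    intro m n hmn s' t' l hs ht
    have hsm : (l ++ [m]) ++ s' ∈ T := by simpa using hs
    have hchild : l ++ [m] ∈ T := hclosed _ hsm _ ⟨s', rfl⟩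
    have h1 : go hwf (m :: s') l hs ≤ F hwf l (m + 1) := by
      show F hwf l m + go hwf s' (l ++ [m]) _ ≤ F hwf l m + term hwf l m
      refine add_le_add_right ?_ _
      rw [term_eq hwf hchild]
      exact (go_le hwf hclosed s' (l ++ [m]) _ hchild).1
    have h2 : F hwf l (m + 1) ≤ F hwf l n := F_mono hwf l hmn
    have h3 : F hwf l n < go hwf (n :: t') l ht := by
      show F hwf l n < F hwf l n + go hwf t' (l ++ [n]) _
      exact lt_add_of_pos_right _ (go_pos hwf t' (l ++ [n]) _)
    exact (h1.trans h2).trans_lt h3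
  | cons a p ih =>
    intro m n hmn s' t' l hs ht
    show F hwf l a + go hwf (p ++ m :: s') (l ++ [a]) _ <
      F hwf l a + go hwf (p ++ n :: t') (l ++ [a]) _
    exact add_lt_add_right (ih hmn s' t' (l ++ [a]) _ _) _

end KBProof

theorem kb_type_le_omega_pow_depth (T : Set (List ℕ))
    (hclosed : PrefixClosed T) (hroot : ([] : List ℕ) ∈ T)
    (hwf : WellFounded (fun a b : T => (b : List ℕ) <+: (a : List ℕ) ∧ (b : List ℕ) ≠ (a : List ℕ)))
    (hwo : IsWellOrder T (fun a b : T => KBLt (a : List ℕ) (b : List ℕ))) :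
    @Ordinal.type T (fun a b : T => KBLt (a : List ℕ) (b : List ℕ)) hwo ≤
      Ordinal.omega0 ^ (hwf.apply (⟨[], hroot⟩ : T)).rank + 1 := by
  classical
  open Ordinal KBProof in
  haveI := hwo
  set α := (hwf.apply (⟨[], hroot⟩ : T)).rank with hα
  set c := omega0 ^ α + 1 with hc
  let f : T → Ordinal := fun x => go hwf (x : List ℕ) [] (by simpa using x.2)
  have hf_lt : ∀ x : T, f x < c := by
    rintro ⟨x, hx⟩
    rcases eq_or_ne x [] with rfl | h
    · show go hwf [] [] _ < c
      show omega0 ^ (hwf.apply (⟨[], _⟩ : T)).rank < c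
      exact lt_add_of_pos_right _ one_pos
    · have := (go_le hwf hclosed x [] (by simpa using hx) hroot).2 h
      exact this.trans (lt_add_of_pos_right _ one_pos)
  have hf_mono : ∀ x y : T, KBLt (x : List ℕ) (y : List ℕ) → f x < f y := by
    rintro ⟨x, hx⟩ ⟨y, hy⟩ hxy
    rcases hxy with ⟨⟨rest, hrest⟩, hne⟩ | ⟨p, m, n, hmn, ⟨s', hs'⟩, ⟨t', ht'⟩⟩
    · subst hrest
      have hrestne : rest ≠ [] := by rintro rfl; simp at hne
      show go hwf (y ++ rest) [] _ < go hwf y [] _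
      have := go_prefix hwf hclosed y rest [] hrestne (by simpa using hx) (by simpa using hy)
      convert this using 2 <;> simp
    · have hx' : x = p ++ m :: s' := by simpa using hs'.symm
      have hy' : y = p ++ n :: t' := by simpa using ht'.symm
      subst hx'; subst hy'
      show go hwf (p ++ m :: s') [] _ < go hwf (p ++ n :: t') [] _
      have := go_kb2 hwf hclosed p hmn s' t' [] (by simpa using hx) (by simpa using hy)
      convert this using 2 <;> simp
  let g : T → c.ToType := fun x => Ordinal.ToType.mk (o := c) ⟨f x, hf_lt x⟩
  have hg : ∀ x y : T, KBLt (x : List ℕ) (y : List ℕ) → g x < g y := by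
    intro x y h
    exact (OrderIso.lt_iff_lt _).2 (Subtype.mk_lt_mk.2 (hf_mono x y h))
  let emb : RelEmbedding (fun a b : T => KBLt (a : List ℕ) (b : List ℕ))
      ((· < ·) : c.ToType → c.ToType → Prop) := RelEmbedding.ofMonotone g hg
  haveI : IsWellOrder c.ToType ((· < ·) : c.ToType → c.ToType → Prop) := isWellOrder_lt
  have := emb.ordinal_type_le
  rwa [Ordinal.type_toType] at this
end

section
/- Let T and T₂ be prefix-closed subsets of List ℕ, with T₂ a well-founded tree, and suppose kb : T → T₂ is a function such that whenever a, b ∈ T and a is a proper prefix of b, then kb(b) <KB kb(a) in the Kleene–Brouwer ordering on T₂. Then the proper-extension relation on T is well-founded, and the ordinal rank of every node of T (in particular the depth of T) is at most the order type of the Kleene–Brouwer ordering on T₂. -/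
theorem rank_le_kb_type_of_kb_labeling (T T₂ : Set (List ℕ))
    (hT : PrefixClosed T) (hT₂ : PrefixClosed T₂)
    (hwf₂ : WellFounded
      (fun a b : T₂ => (b : List ℕ) <+: (a : List ℕ) ∧ (b : List ℕ) ≠ (a : List ℕ)))
    (hwo₂ : IsWellOrder T₂ (fun a b : T₂ => KBLt (a : List ℕ) (b : List ℕ)))
    (kb : T → T₂)
    (hkb : ∀ a b : T, (a : List ℕ) <+: (b : List ℕ) → (a : List ℕ) ≠ (b : List ℕ) →
      KBLt (kb b : List ℕ) (kb a : List ℕ)) :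
    ∃ hwf : WellFounded
        (fun a b : T => (b : List ℕ) <+: (a : List ℕ) ∧ (b : List ℕ) ≠ (a : List ℕ)),
      ∀ a : T, (hwf.apply a).rank ≤
        @Ordinal.type T₂ (fun a b : T₂ => KBLt (a : List ℕ) (b : List ℕ)) hwo₂ := by
  set S : T₂ → T₂ → Prop := fun a b : T₂ => KBLt (a : List ℕ) (b : List ℕ) with hS
  have hwfS : WellFounded S := hwo₂.wf
  have hwf : WellFounded
      (fun a b : T => (b : List ℕ) <+: (a : List ℕ) ∧ (b : List ℕ) ≠ (a : List ℕ)) := by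
    refine Subrelation.wf (r := InvImage S kb) ?_ (InvImage.wf kb hwfS)
    intro a b h
    exact hkb b a h.1 h.2
  refine ⟨hwf, fun a => ?_⟩
  have key : ∀ a : T, (hwf.apply a).rank ≤ @Ordinal.typein T₂ S hwo₂ (kb a) := by
    intro a
    induction a using hwf.induction with
    | _ a ih =>
      rw [Acc.rank_eq]
      refine Ordinal.iSup_le fun ⟨b, hb⟩ => ?_
      have h1 : (hwf.apply b).rank < @Ordinal.typein T₂ S hwo₂ (kb a) :=
        lt_of_le_of_lt (ih b hb) (by
          rw [Ordinal.typein_lt_typein]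
          exact hkb a b hb.1 hb.2)
      exact Order.succ_le_of_lt h1
  exact le_of_lt (lt_of_le_of_lt (key a) (Ordinal.typein_lt_type _ _))
end

section
/- Transfinite induction along the Kleene–Brouwer ordering: let T₂ ⊆ List ℕ be a prefix-closed well-founded tree and X : List ℕ → Prop a predicate that is progressive with respect to the Kleene–Brouwer ordering on T₂, i.e., for all a ∈ T₂, if X(b) holds for all b ∈ T₂ with b <KB a, then X(a). Then X(a) holds for every a ∈ T₂. -/
/-- Two one-step extensions of the same list that are prefixes of a common list agree. -/
lemma KB.eq_of_snoc_prefix {l : List ℕ} {m n : ℕ} {a : List ℕ}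
    (h1 : (l ++ [m]) <+: a) (h2 : (l ++ [n]) <+: a) : m = n := by
  have := (List.prefix_of_prefix_length_le h1 h2 (by simp)).eq_of_length (by simp)
  simpa using this

lemma KB.ne_nil {a' a : List ℕ} (h : KBLt a' a) : a' ≠ [] := by
  rcases h with ⟨hpre, hne⟩ | ⟨l, m, n, _, h1, _⟩
  · rintro rfl
    exact hne (List.prefix_nil.1 hpre)
  · rintro rfl
    have := h1.length_le
    simp at this

/-- Dropping a common prefix preserves the KB ordering. -/
lemma KB.drop {a a' b : List ℕ} (h : KBLt a' a) (hb : b <+: a) (hb' : b <+: a') :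
    KBLt (a'.drop b.length) (a.drop b.length) := by
  obtain ⟨t, ht⟩ := hb
  obtain ⟨t', ht'⟩ := hb'
  subst ht ht'
  rw [List.drop_left, List.drop_left]
  rcases h with ⟨hpre, hne⟩ | ⟨l, m, n, hmn, h1, h2⟩
  · refine Or.inl ⟨(List.prefix_append_right_inj b).1 hpre, ?_⟩
    rintro rfl; exact hne rfl
  · rcases List.prefix_or_prefix_of_prefix h1 (b.prefix_append t') with hc | hc
    · -- l ++ [m] <+: b : contradiction
      exact absurd (KB.eq_of_snoc_prefix (hc.trans (b.prefix_append t)) h2) hmn.ne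
    · rcases le_or_gt b.length l.length with hl | hl
      · have hbl : b <+: l :=
          List.prefix_of_prefix_length_le (b.prefix_append t')
            ((l.prefix_append [m]).trans h1) hl
        obtain ⟨l₂, rfl⟩ := hbl
        rw [List.append_assoc] at h1 h2
        exact Or.inr ⟨l₂, m, n, hmn, (List.prefix_append_right_inj b).1 h1,
          (List.prefix_append_right_inj b).1 h2⟩
      · have hlen : b.length = l.length + 1 :=
          le_antisymm (by simpa using hc.length_le) hl
        have hb : b = l ++ [m] := hc.eq_of_length (by simpa using hlen)
        have hm : (l ++ [m]) <+: (b ++ t) := hb ▸ b.prefix_append t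
        exact absurd (KB.eq_of_snoc_prefix hm h2) hmn.ne

/-- The first element is monotone along the KB ordering. -/
lemma KB.headI_le {a' a : List ℕ} (h : KBLt a' a) (ha : a ≠ []) : a'.headI ≤ a.headI := by
  rcases h with ⟨⟨t, rfl⟩, _⟩ | ⟨l, m, n, hmn, ⟨t1, rfl⟩, ⟨t2, rfl⟩⟩
  · cases a with
    | nil => exact absurd rfl ha
    | cons x xs => simp
  · cases l with
    | nil => simpa using hmn.le
    | cons x l' => simp

lemma eventually_const {f : ℕ → ℕ} {N : ℕ} (h : ∀ i, N ≤ i → f (i + 1) ≤ f i) :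
    ∃ M, N ≤ M ∧ ∀ i, M ≤ i → f i = f M := by
  classical
  have chain : ∀ i j, N ≤ i → i ≤ j → f j ≤ f i := by
    intro i j hi hij
    induction j, hij using Nat.le_induction with
    | base => exact le_rfl
    | succ j hij ih => exact (h j (hi.trans hij)).trans ih
  have hex : ∃ v, ∃ i, N ≤ i ∧ f i = v := ⟨f N, N, le_rfl, rfl⟩
  obtain ⟨i, hNi, hfi⟩ := Nat.find_spec hex
  refine ⟨i, hNi, fun j hj => le_antisymm (chain i j hNi hj) ?_⟩
  rw [hfi]
  exact Nat.find_min' hex ⟨j, hNi.trans hj, rfl⟩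

/-- From a KB-descending sequence, extract arbitrarily long stable proper prefixes. -/
lemma KB.branch {a : ℕ → List ℕ} (hd : ∀ i, KBLt (a (i + 1)) (a i)) :
    ∀ k, ∃ N b, b.length = k ∧ ∀ i, N ≤ i → b <+: a i ∧ b ≠ a i := by
  intro k
  induction k with
  | zero =>
    refine ⟨1, [], rfl, fun i hi => ⟨List.nil_prefix, ?_⟩⟩
    obtain ⟨j, rfl⟩ := Nat.exists_eq_add_of_le hi
    have e : 1 + j = j + 1 := by omega
    rw [e]
    exact fun h => KB.ne_nil (hd j) h.symm
  | succ k ih =>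
    obtain ⟨N, b, hlen, hb⟩ := ih
    have hlong : ∀ i, N ≤ i → k < (a i).length := by
      intro i hi
      have h1 := (hb i hi).1.length_le
      have h2 : b.length ≠ (a i).length := fun he => (hb i hi).2 ((hb i hi).1.eq_of_length he)
      omega
    set f := fun i => ((a i).drop k).headI with hf
    have hdrop : ∀ i, N ≤ i → KBLt ((a (i + 1)).drop k) ((a i).drop k) := by
      intro i hi
      have := KB.drop (hd i) (hb i hi).1 (hb (i + 1) (hi.trans (Nat.le_succ i))).1
      rwa [hlen] at this
    have hne : ∀ i, N ≤ i → (a i).drop k ≠ [] := by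
      intro i hi h
      have := congrArg List.length h
      simp [List.length_drop] at this
      have := hlong i hi
      omega
    have hmono : ∀ i, N ≤ i → f (i + 1) ≤ f i := fun i hi =>
      KB.headI_le (hdrop i hi) (hne i hi)
    obtain ⟨M, hNM, hM⟩ := eventually_const hmono
    have hbM : ∀ i, M ≤ i → (b ++ [f M]) <+: a i := by
      intro i hi
      have h1 : (a i).drop k ≠ [] := hne i (hNM.trans hi)
      have h2 : ((a i).drop k).headI = f M := hM i hi
      obtain ⟨t, ht⟩ := (hb i (hNM.trans hi)).1
      have htd : (a i).drop k = t := by rw [← ht, ← hlen, List.drop_left]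
      rw [← ht]
      apply (List.prefix_append_right_inj b).2
      rw [htd] at h1 h2
      cases t with
      | nil => exact absurd rfl h1
      | cons x xs =>
        simp only [List.headI_cons] at h2
        exact ⟨xs, by rw [h2]; rfl⟩
    refine ⟨M + 1, b ++ [f M], by simp [hlen], fun i hi => ⟨hbM i (Nat.le_of_succ_le hi), ?_⟩⟩
    obtain ⟨j, rfl⟩ := Nat.exists_eq_add_of_le hi
    have e : M + 1 + j = (M + j) + 1 := by omega
    rw [e]
    have hKB : KBLt ((a ((M + j) + 1)).drop (k + 1)) ((a (M + j)).drop (k + 1)) := by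
      have := KB.drop (hd (M + j)) (hbM (M + j) (Nat.le_add_right M j))
        (hbM ((M + j) + 1) (by omega))
      rwa [show (b ++ [f M]).length = k + 1 by simp [hlen]] at this
    have hnn := KB.ne_nil hKB
    intro heq
    have h1 : (a ((M + j) + 1)).length = k + 1 := by rw [← heq]; simp [hlen]
    exact hnn (by simp [List.drop_eq_nil_iff, h1])

lemma KB.exists_desc {α : Type*} {r : α → α → Prop} (h : ¬ WellFounded r) :
    ∃ f : ℕ → α, ∀ n, r (f (n + 1)) (f n) := by
  have hx : ∃ x, ¬ Acc r x := by
    by_contra hc; push_neg at hc; exact h ⟨hc⟩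
  have step : ∀ x, ¬ Acc r x → ∃ y, r y x ∧ ¬ Acc r y := by
    intro x hx
    by_contra hc; push_neg at hc
    exact hx (Acc.intro x hc)
  obtain ⟨x0, hx0⟩ := hx
  let g : ℕ → {x // ¬ Acc r x} := fun n => Nat.rec ⟨x0, hx0⟩
    (fun _ p => ⟨(step p.1 p.2).choose, (step p.1 p.2).choose_spec.2⟩) n
  exact ⟨fun n => (g n).1, fun n => (step (g n).1 (g n).2).choose_spec.1⟩

lemma KB.no_desc {α : Type*} {r : α → α → Prop} (h : WellFounded r) (f : ℕ → α)
    (hf : ∀ n, r (f (n + 1)) (f n)) : False := by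
  have key : ∀ x, ∀ f : ℕ → α, f 0 = x → ¬ ∀ n, r (f (n + 1)) (f n) := by
    intro x
    induction x using h.induction with
    | _ x ih =>
      intro f h0 hf
      exact ih (f 1) (h0 ▸ hf 0) (fun n => f (n + 1)) rfl (fun n => hf (n + 1))
  exact key (f 0) f rfl hf

theorem kb_transfinite_induction (T₂ : Set (List ℕ)) (hclosed : PrefixClosed T₂)
    (hwf : WellFounded
      (fun a b : T₂ => (b : List ℕ) <+: (a : List ℕ) ∧ (b : List ℕ) ≠ (a : List ℕ)))
    (X : List ℕ → Prop)
    (hprog : ∀ a ∈ T₂, (∀ b ∈ T₂, KBLt b a → X b) → X a) :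
    ∀ a ∈ T₂, X a := by
  have wfKB : WellFounded (fun a b : T₂ => KBLt (a : List ℕ) (b : List ℕ)) := by
    by_contra hw
    obtain ⟨g, hg⟩ := KB.exists_desc hw
    have hd : ∀ i, KBLt ((g (i + 1) : T₂) : List ℕ) ((g i : T₂) : List ℕ) := hg
    choose N b hlen hb using KB.branch hd
    have hmem : ∀ k, b k ∈ T₂ :=
      fun k => hclosed ((g (N k) : T₂) : List ℕ) (g (N k)).2 (b k) (hb k (N k) le_rfl).1
    have hstep : ∀ k, b k <+: b (k + 1) ∧ b k ≠ b (k + 1) := by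
      intro k
      have h1 := (hb k (max (N k) (N (k + 1))) (le_max_left _ _)).1
      have h2 := (hb (k + 1) (max (N k) (N (k + 1))) (le_max_right _ _)).1
      refine ⟨List.prefix_of_prefix_length_le h1 h2 (by rw [hlen, hlen]; omega), fun he => ?_⟩
      have := congrArg List.length he
      rw [hlen, hlen] at this
      omega
    exact KB.no_desc hwf (fun k => ⟨b k, hmem k⟩) (fun k => ⟨(hstep k).1, (hstep k).2⟩)
  intro a ha
  have key : ∀ x : T₂, X (x : List ℕ) := by
    intro x
    induction x using wfKB.induction with
    | _ x ih => exact hprog x x.2 (fun c hc hkb => ih ⟨c, hc⟩ hkb)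
  exact key ⟨a, ha⟩
end
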